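/- For every λ ∈ [−1, 1] and every u ∈ ℂ with |u| < 1: | (1/2π) ∫_0^{2π} |1 − e^{iθ} u|^{−2λ} dθ − 1 − λ²|u|² | ≤ |u|⁴ / (1 − |u|²). -/

import Mathlib

open MeasureTheory Real


noncomputable def bc (a : ℝ) (n : ℕ) : ℂ := ∏ k ∈ Finset.range n, (((a : ℂ) + k) / (k + 1))

lemma bc_zero (a : ℝ) : bc a 0 = 1 := by simp [bc]

lemma bc_succ (a : ℝ) (n : ℕ) : bc a (n + 1) = bc a n * (((a : ℂ) + n) / (n + 1)) := by
  rw [bc, bc, Finset.prod_range_succ]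

lemma bc_one (a : ℝ) : bc a 1 = (a : ℂ) := by simp [bc_succ, bc_zero]

lemma bc_rec (a : ℝ) (n : ℕ) : ((n : ℂ) + 1) * bc a (n + 1) = ((a : ℂ) + n) * bc a n := by
  have h : ((n : ℂ) + 1) ≠ 0 := Nat.cast_add_one_ne_zero n
  rw [bc_succ]; field_simp

lemma bc_norm (a : ℝ) (ha : |a| ≤ 1) (n : ℕ) : ‖bc a n‖ ≤ 1 := by
  induction n with
  | zero => simp [bc_zero]
  | succ n ih =>
    rw [bc_succ, norm_mul]
    have h1 : ‖(((a : ℂ) + n) / (n + 1))‖ ≤ 1 := by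
      rw [norm_div]
      have hd : ‖((n : ℂ) + 1)‖ = (n : ℝ) + 1 := by
        rw [show ((n : ℂ) + 1) = ((n + 1 : ℝ) : ℂ) by push_cast; ring, Complex.norm_real,
          Real.norm_of_nonneg (by positivity)]
      rw [hd, div_le_one (by positivity)]
      calc ‖((a : ℂ) + n)‖ ≤ ‖(a : ℂ)‖ + ‖(n : ℂ)‖ := norm_add_le _ _
        _ ≤ 1 + n := by
            rw [Complex.norm_real, Complex.norm_natCast]
            exact add_le_add_left (by simpa using ha) _
        _ = (n : ℝ) + 1 := by ring
    calc ‖bc a n‖ * ‖(((a : ℂ) + n) / (n + 1))‖ ≤ 1 * 1 :=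
      mul_le_mul ih h1 (norm_nonneg _) zero_le_one
    _ = 1 := one_mul 1

lemma bc_hasSum (a : ℝ) (ha : |a| ≤ 1) {w : ℂ} (hw : ‖w‖ < 1) :
    HasSum (fun n => bc a n * w ^ n) ((1 - w) ^ (-(a : ℂ))) := by
  set ρ : ℝ := (1 + ‖w‖) / 2 with hρdef
  have hρ0 : 0 < ρ := by positivity
  have hρ1 : ρ < 1 := by simp only [hρdef]; linarith
  have hwρ : ‖w‖ < ρ := by simp only [hρdef]; linarith
  set t : Set ℂ := Metric.ball (0 : ℂ) ρ with htdef
  have ht : IsOpen t := Metric.isOpen_ball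
  have hmem : ∀ z ∈ t, ‖z‖ < ρ := by
    intro z hz; simpa [htdef, Metric.mem_ball, dist_zero_right] using hz
  have hwt : w ∈ t := by simpa [htdef, Metric.mem_ball, dist_zero_right] using hwρ
  have h0t : (0 : ℂ) ∈ t := by simpa [htdef, Metric.mem_ball] using hρ0
  -- summability of the series on t
  have hsum : ∀ z : ℂ, ‖z‖ < ρ → Summable (fun n => bc a n * z ^ n) := by
    intro z hz
    refine Summable.of_norm_bounded
      (summable_geometric_of_lt_one hρ0.le hρ1) (fun n => ?_)
    rw [norm_mul, norm_pow]
    calc ‖bc a n‖ * ‖z‖ ^ n ≤ 1 * ρ ^ n := by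
          apply mul_le_mul (bc_norm a ha n) (pow_le_pow_left₀ (norm_nonneg _) hz.le n)
            (by positivity) zero_le_one
      _ = ρ ^ n := one_mul _
  -- bound for the derivative series
  set u : ℕ → ℝ := fun n => (n : ℝ) * ρ ^ (n - 1) with hudef
  have hu : Summable u := by
    have h1 : Summable (fun n : ℕ => (n : ℝ) * ρ ^ n) := by
      simpa using summable_pow_mul_geometric_of_norm_lt_one 1
        (r := ρ) (by rwa [Real.norm_of_nonneg hρ0.le])
    have h2 : Summable (fun n : ℕ => ρ ^ n) := summable_geometric_of_lt_one hρ0.le hρ1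
    have h3 : Summable (fun n : ℕ => ((n : ℝ) + 1) * ρ ^ n) := by
      simpa [add_mul, one_mul] using h1.add h2
    refine (summable_nat_add_iff 1).mp ?_
    have e : (fun n : ℕ => u (n + 1)) = fun n : ℕ => ((n : ℝ) + 1) * ρ ^ n := by
      funext n
      show ((n + 1 : ℕ) : ℝ) * ρ ^ (n + 1 - 1) = _
      rw [Nat.add_sub_cancel]; push_cast; ring
    rw [e]; exact h3
  have hbound : ∀ (n : ℕ), ∀ y ∈ t, ‖bc a n * ((n : ℂ) * y ^ (n - 1))‖ ≤ u n := by
    intro n y hy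
    rw [norm_mul, norm_mul, norm_pow, Complex.norm_natCast]
    calc ‖bc a n‖ * ((n : ℝ) * ‖y‖ ^ (n - 1)) ≤ 1 * ((n : ℝ) * ρ ^ (n - 1)) := by
          apply mul_le_mul (bc_norm a ha n) ?_ (by positivity) zero_le_one
          exact mul_le_mul_of_nonneg_left
            (pow_le_pow_left₀ (norm_nonneg _) (hmem y hy).le _) (Nat.cast_nonneg n)
      _ = u n := one_mul _
  have hg : ∀ (n : ℕ), ∀ y ∈ t, HasDerivAt (fun z : ℂ => bc a n * z ^ n)
      (bc a n * ((n : ℂ) * y ^ (n - 1))) y :=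
    fun n y _ => (hasDerivAt_pow n y).const_mul _
  set S : ℂ → ℂ := fun z => ∑' n, bc a n * z ^ n with hSdef
  set S' : ℂ → ℂ := fun y => ∑' n, bc a n * ((n : ℂ) * y ^ (n - 1)) with hS'def
  have hS : ∀ y ∈ t, HasDerivAt S (S' y) y := by
    intro y hy
    exact hasDerivAt_tsum_of_isPreconnected hu ht ((convex_ball _ _).isPreconnected)
      hg hbound h0t (hsum 0 (by simpa using hρ0)) hy
  -- the ODE identity
  have key : ∀ y ∈ t, (1 - y) * S' y = (a : ℂ) * S y := by
    intro y hy
    have hy' : ‖y‖ < ρ := hmem y hy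
    have hsS : HasSum (fun n => bc a n * y ^ n) (S y) := (hsum y hy').hasSum
    have hsS' : HasSum (fun n => bc a n * ((n : ℂ) * y ^ (n - 1))) (S' y) :=
      (Summable.of_norm_bounded hu (fun n => hbound n y hy)).hasSum
    have h1 : HasSum (fun n => bc a (n + 1) * (((n : ℕ) + 1 : ℂ) * y ^ n)) (S' y) := by
      have := (hasSum_nat_add_iff' 1).mpr hsS'
      simpa using this
    have h2 : HasSum (fun n => ((a : ℂ) + n) * (bc a n * y ^ n)) (S' y) := by
      have e : (fun n : ℕ => bc a (n + 1) * (((n : ℕ) + 1 : ℂ) * y ^ n))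
          = fun n : ℕ => ((a : ℂ) + n) * (bc a n * y ^ n) := by
        funext n
        have := bc_rec a n
        calc bc a (n + 1) * (((n : ℕ) + 1 : ℂ) * y ^ n)
            = (((n : ℂ) + 1) * bc a (n + 1)) * y ^ n := by ring
          _ = (((a : ℂ) + n) * bc a n) * y ^ n := by rw [this]
          _ = ((a : ℂ) + n) * (bc a n * y ^ n) := by ring
      rwa [e] at h1
    have h3 : HasSum (fun n : ℕ => (n : ℂ) * (bc a n * y ^ n)) (y * S' y) := by
      have := hsS'.mul_left y
      have e : (fun n : ℕ => y * (bc a n * ((n : ℂ) * y ^ (n - 1))))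
          = fun n : ℕ => (n : ℂ) * (bc a n * y ^ n) := by
        funext n
        cases n with
        | zero => simp
        | succ m => simp only [Nat.add_sub_cancel, pow_succ]; push_cast; ring
      rwa [e] at this
    have h4 : HasSum (fun n => (a : ℂ) * (bc a n * y ^ n)) ((a : ℂ) * S y) := hsS.mul_left _
    have h5 : HasSum (fun n => ((a : ℂ) + n) * (bc a n * y ^ n))
        ((a : ℂ) * S y + y * S' y) := by
      have := h4.add h3
      have e : (fun n : ℕ => (a : ℂ) * (bc a n * y ^ n) + (n : ℂ) * (bc a n * y ^ n))
          = fun n : ℕ => ((a : ℂ) + n) * (bc a n * y ^ n) := by funext n; ring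
      rwa [e] at this
    have huniq : S' y = (a : ℂ) * S y + y * S' y := h2.unique h5
    linear_combination huniq
  -- nonvanishing of 1 - y on t
  have h1my : ∀ y ∈ t, (1 : ℂ) - y ≠ 0 := by
    intro y hy h
    have : ‖y‖ < 1 := lt_trans (hmem y hy) hρ1
    rw [sub_eq_zero] at h
    rw [← h] at this; simp at this
  have hslit : ∀ y ∈ t, (1 - y) ∈ Complex.slitPlane := by
    intro y hy
    left
    have h1 : |y.re| ≤ ‖y‖ := Complex.abs_re_le_norm y
    have h2 : ‖y‖ < 1 := lt_trans (hmem y hy) hρ1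
    have : y.re < 1 := lt_of_le_of_lt (le_trans (le_abs_self _) h1) h2
    simpa [Complex.sub_re] using this
  -- F has zero derivative
  set F : ℂ → ℂ := fun z => S z * (1 - z) ^ (a : ℂ) with hFdef
  have hF : ∀ y ∈ t, HasDerivAt F 0 y := by
    intro y hy
    have hc : HasDerivAt (fun z : ℂ => (1 - z) ^ (a : ℂ))
        ((a : ℂ) * (1 - y) ^ ((a : ℂ) - 1) * (-1)) y :=
      HasDerivAt.cpow_const ((hasDerivAt_id y).const_sub 1) (hslit y hy)
    have hmul := (hS y hy).mul hc
    refine HasDerivAt.congr_deriv (f := F) hmul (Eq.symm ?_)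
    have hpow : (1 - y) ^ (a : ℂ) = (1 - y) * (1 - y) ^ ((a : ℂ) - 1) := by
      conv_lhs => rw [show (a : ℂ) = 1 + ((a : ℂ) - 1) by ring]
      rw [Complex.cpow_add _ _ (h1my y hy), Complex.cpow_one]
    have hk := key y hy
    rw [hpow]
    linear_combination (-(1 - y) ^ ((a : ℂ) - 1)) * hk
  -- constancy
  have hconst : F w = F 0 := by
    refine (convex_ball (0 : ℂ) ρ).is_const_of_fderivWithin_eq_zero
      (fun y hy => ((hF y hy).differentiableAt).differentiableWithinAt) ?_ hwt h0t
    intro y hy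
    rw [fderivWithin_of_isOpen ht hy, (hF y hy).hasFDerivAt.fderiv]
    refine ContinuousLinearMap.ext fun z => ?_; simp
  have hF0 : F 0 = 1 := by
    have hS0 : S 0 = 1 := by
      simp only [hSdef]
      rw [tsum_eq_single 0 (fun b hb => by simp [zero_pow hb])]
      simp [bc_zero]
    simp [hFdef, hS0, Complex.one_cpow]
  have hSw : S w * (1 - w) ^ (a : ℂ) = 1 := hconst.trans hF0
  have hne : (1 - w) ^ (a : ℂ) ≠ 0 := by
    simp [Complex.cpow_eq_zero_iff, h1my w hwt]
  have hfin : S w = (1 - w) ^ (-(a : ℂ)) := by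
    rw [Complex.cpow_neg]
    exact eq_inv_of_mul_eq_one_left (by rw [mul_comm] at hSw ⊢; exact hSw)
  rw [← hfin]
  exact (hsum w hwρ).hasSum

lemma circle_integral_eq (l : ℝ) (hl : |l| ≤ 1) (u : ℂ) (hu : ‖u‖ < 1) :
    (∫ θ in (0:ℝ)..(2 * π), ‖1 - Complex.exp (θ * Complex.I) * u‖ ^ (-(2 * l)))
      = 2 * π * ∑' n : ℕ, ‖bc l n * u ^ n‖ ^ 2 := by
  have h2π : (0:ℝ) ≤ 2 * π := by positivity
  set b : ℕ → ℂ := fun n => bc l n * u ^ n with hbdef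
  have hbn : ∀ n, ‖b n‖ ≤ ‖u‖ ^ n := by
    intro n
    rw [hbdef]
    simp only [norm_mul, norm_pow]
    calc ‖bc l n‖ * ‖u‖ ^ n ≤ 1 * ‖u‖ ^ n :=
          mul_le_mul_of_nonneg_right (bc_norm l hl n) (by positivity)
      _ = ‖u‖ ^ n := one_mul _
  have hexp : ∀ x : ℝ, ‖Complex.exp ((x : ℂ) * Complex.I)‖ = 1 := fun x => by
    exact Complex.norm_exp_ofReal_mul_I x
  have hprod : ∀ θ : ℝ, ‖Complex.exp ((θ : ℂ) * Complex.I) * u‖ < 1 := fun θ => by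
    rw [norm_mul, hexp, one_mul]; exact hu
  have hne : ∀ θ : ℝ, (1 : ℂ) - Complex.exp ((θ : ℂ) * Complex.I) * u ≠ 0 := by
    intro θ h
    rw [sub_eq_zero] at h
    have := hprod θ
    rw [← h] at this; simp at this
  set g : ℝ → ℂ := fun θ => (1 - Complex.exp ((θ : ℂ) * Complex.I) * u) ^ (-(l : ℂ)) with hgdef
  -- term norm
  have hterm_norm : ∀ (θ : ℝ) (n : ℕ), ‖b n * Complex.exp ((n : ℂ) * ((θ : ℂ) * Complex.I))‖ ≤ ‖u‖ ^ n := by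
    intro θ n
    rw [norm_mul, show (n : ℂ) * ((θ : ℂ) * Complex.I) = ((n * θ : ℝ) : ℂ) * Complex.I by
      push_cast; ring, hexp, mul_one]
    exact hbn n
  have hgsum : ∀ θ : ℝ,
      HasSum (fun n => b n * Complex.exp ((n : ℂ) * ((θ : ℂ) * Complex.I))) (g θ) := by
    intro θ
    have h := bc_hasSum l hl (hprod θ)
    have e : (fun n => bc l n * (Complex.exp ((θ : ℂ) * Complex.I) * u) ^ n)
        = fun n => b n * Complex.exp ((n : ℂ) * ((θ : ℂ) * Complex.I)) := by
      funext n
      rw [mul_pow, ← Complex.exp_nat_mul, hbdef]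
      ring
    rwa [e] at h
  -- pointwise integrand identity
  have hpt : ∀ θ : ℝ, ((‖1 - Complex.exp ((θ : ℂ) * Complex.I) * u‖ ^ (-(2 * l)) : ℝ) : ℂ)
      = g θ * (starRingEnd ℂ) (g θ) := by
    intro θ
    rw [Complex.mul_conj, Complex.normSq_eq_norm_sq]
    congr 1
    have h0 : (0:ℝ) < ‖1 - Complex.exp ((θ : ℂ) * Complex.I) * u‖ :=
      norm_pos_iff.mpr (hne θ)
    have habs : ‖g θ‖
        = ‖1 - Complex.exp ((θ : ℂ) * Complex.I) * u‖ ^ (-l) := by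
      rw [hgdef]
      simp only
      rw [show (-(l : ℂ)) = ((-l : ℝ) : ℂ) by push_cast; ring, Complex.norm_cpow_real]
    rw [habs, ← Real.rpow_natCast (_ ^ (-l)) 2, ← Real.rpow_mul h0.le]
    norm_num
    ring_nf
  -- the double-series expansion
  set H : ℕ × ℕ → ℝ → ℂ := fun p θ =>
    (b p.1 * (starRingEnd ℂ) (b p.2)) *
      Complex.exp ((((p.1 : ℤ) - (p.2 : ℤ) : ℤ) : ℂ) * θ * Complex.I) with hHdef
  have hHsum : ∀ θ : ℝ, g θ * (starRingEnd ℂ) (g θ) = ∑' p : ℕ × ℕ, H p θ := by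
    intro θ
    have h1 := hgsum θ
    have h2 : HasSum (fun m => (starRingEnd ℂ) (b m) *
        Complex.exp (-((m : ℂ) * ((θ : ℂ) * Complex.I)))) ((starRingEnd ℂ) (g θ)) := by
      have := h1.star
      have e : (fun m => star (b m * Complex.exp ((m : ℂ) * ((θ : ℂ) * Complex.I))))
          = fun m => (starRingEnd ℂ) (b m) *
              Complex.exp (-((m : ℂ) * ((θ : ℂ) * Complex.I))) := by
        funext m
        rw [star_mul']
        congr 1
        rw [show (star (Complex.exp ((m : ℂ) * ((θ : ℂ) * Complex.I))) : ℂ)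
          = (starRingEnd ℂ) (Complex.exp ((m : ℂ) * ((θ : ℂ) * Complex.I))) from rfl,
          ← Complex.exp_conj]
        congr 1
        simp [map_mul, Complex.conj_ofReal, Complex.conj_I]
      rwa [e] at this
    have hf1 : Summable fun n => ‖b n * Complex.exp ((n : ℂ) * ((θ : ℂ) * Complex.I))‖ :=
      Summable.of_nonneg_of_le (fun n => norm_nonneg _) (hterm_norm θ)
        (summable_geometric_of_lt_one (norm_nonneg u) hu)
    have hf2 : Summable fun m => ‖(starRingEnd ℂ) (b m) *
        Complex.exp (-((m : ℂ) * ((θ : ℂ) * Complex.I)))‖ := by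
      refine Summable.of_nonneg_of_le (fun n => norm_nonneg _) (fun m => ?_)
        (summable_geometric_of_lt_one (norm_nonneg u) hu)
      rw [norm_mul, show (-((m : ℂ) * ((θ : ℂ) * Complex.I)))
        = ((-(m * θ) : ℝ) : ℂ) * Complex.I by push_cast; ring, hexp, mul_one,
        RingHomIsometric.norm_map]
      exact hbn m
    rw [← h2.tsum_eq, ← h1.tsum_eq, tsum_mul_tsum_of_summable_norm hf1 hf2]
    congr 1
    funext p
    rw [hHdef]
    simp only
    rw [mul_mul_mul_comm, ← Complex.exp_add]
    congr 2
    push_cast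
    ring
  -- integrability of each term
  have hInt : ∀ p : ℕ × ℕ, IntegrableOn (H p) (Set.Ioc 0 (2 * π)) := by
    intro p
    apply Continuous.integrableOn_Ioc
    apply Continuous.mul continuous_const
    exact Complex.continuous_exp.comp
      ((continuous_const.mul Complex.continuous_ofReal).mul continuous_const)
  -- norm of H
  have hHnorm : ∀ (p : ℕ × ℕ) (θ : ℝ), ‖H p θ‖ = ‖b p.1‖ * ‖b p.2‖ := by
    intro p θ
    rw [hHdef]
    simp only
    rw [norm_mul, norm_mul, show ((((p.1 : ℤ) - (p.2 : ℤ) : ℤ) : ℂ) * θ * Complex.I)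
      = (((((p.1 : ℤ) - (p.2 : ℤ) : ℤ) : ℝ) * θ : ℝ) : ℂ) * Complex.I by push_cast; ring,
      hexp, mul_one, RingHomIsometric.norm_map]
  -- summability of the integrals
  have hSummable : Summable fun p : ℕ × ℕ => ∫ θ in Set.Ioc 0 (2 * π), ‖H p θ‖ := by
    have hb2 : Summable fun p : ℕ × ℕ => (2 * π) * (‖u‖ ^ p.1 * ‖u‖ ^ p.2) := by
      apply Summable.mul_left
      apply summable_mul_of_summable_norm (f := fun n : ℕ => ‖u‖ ^ n) (g := fun n : ℕ => ‖u‖ ^ n)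
        <;> · simp only [norm_pow, norm_norm]
              exact summable_geometric_of_lt_one (norm_nonneg u) hu
    refine Summable.of_nonneg_of_le
      (fun p => integral_nonneg (fun θ => norm_nonneg _)) (fun p => ?_) hb2
    have step : ∫ θ in Set.Ioc 0 (2 * π), ‖H p θ‖
        ≤ ∫ _ in Set.Ioc 0 (2 * π), (‖b p.1‖ * ‖b p.2‖) := by
      apply setIntegral_mono_on ((hInt p).norm) ((integrableOn_const_iff).mpr (Or.inr (by
        rw [Real.volume_Ioc]; exact ENNReal.ofReal_lt_top))) measurableSet_Ioc
      intro θ _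
      rw [hHnorm p θ]
    calc ∫ θ in Set.Ioc 0 (2 * π), ‖H p θ‖ ≤ ∫ _ in Set.Ioc 0 (2 * π), (‖b p.1‖ * ‖b p.2‖) := step
      _ = (2 * π) * (‖b p.1‖ * ‖b p.2‖) := by
          rw [setIntegral_const, Real.volume_real_Ioc_of_le h2π, smul_eq_mul]
          ring_nf
      _ ≤ (2 * π) * (‖u‖ ^ p.1 * ‖u‖ ^ p.2) := by
          apply mul_le_mul_of_nonneg_left _ h2π
          exact mul_le_mul (hbn p.1) (hbn p.2) (norm_nonneg _) (by positivity)
  -- value of each integral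
  have hval : ∀ p : ℕ × ℕ, (∫ θ in Set.Ioc 0 (2 * π), H p θ)
      = if p.1 = p.2 then ((2 * π : ℝ) : ℂ) * (b p.1 * (starRingEnd ℂ) (b p.2)) else 0 := by
    intro p
    rw [← intervalIntegral.integral_of_le h2π]
    rw [hHdef]
    simp only
    rw [intervalIntegral.integral_const_mul]
    by_cases hpq : p.1 = p.2
    · rw [if_pos hpq, hpq]
      simp only [sub_self, Int.cast_zero, zero_mul, Complex.exp_zero]
      rw [intervalIntegral.integral_const]
      simp only [sub_zero, Complex.real_smul, mul_one]
      push_cast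
      ring
    · rw [if_neg hpq]
      have hk : ((((p.1 : ℤ) - (p.2 : ℤ) : ℤ) : ℂ)) ≠ 0 := by
        rw [Int.cast_ne_zero, sub_ne_zero]
        exact_mod_cast hpq
      have hkI : ((((p.1 : ℤ) - (p.2 : ℤ) : ℤ) : ℂ)) * Complex.I ≠ 0 :=
        mul_ne_zero hk Complex.I_ne_zero
      have e : (fun θ : ℝ => Complex.exp (((((p.1 : ℤ) - (p.2 : ℤ) : ℤ) : ℂ)) * θ * Complex.I))
          = fun θ : ℝ => Complex.exp ((((((p.1 : ℤ) - (p.2 : ℤ) : ℤ) : ℂ)) * Complex.I) * θ) := by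
        funext θ; ring_nf
      rw [e, integral_exp_mul_complex hkI]
      rw [show (((((p.1 : ℤ) - (p.2 : ℤ) : ℤ) : ℂ)) * Complex.I) * ((2 * π : ℝ) : ℂ)
        = (((p.1 : ℤ) - (p.2 : ℤ) : ℤ) : ℂ) * (2 * (π : ℂ) * Complex.I) by push_cast; ring,
        Complex.exp_int_mul_two_pi_mul_I]
      simp
  -- put everything together over ℂ
  have key : ((∫ θ in (0:ℝ)..(2 * π), ‖1 - Complex.exp ((θ : ℂ) * Complex.I) * u‖ ^ (-(2 * l)) : ℝ) : ℂ)
      = ((2 * π * ∑' n : ℕ, ‖b n‖ ^ 2 : ℝ) : ℂ) := by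
    rw [← intervalIntegral.integral_ofReal]
    rw [intervalIntegral.integral_congr (g := fun θ => g θ * (starRingEnd ℂ) (g θ))
      (fun θ _ => hpt θ)]
    rw [intervalIntegral.integral_of_le h2π]
    rw [show (fun θ => g θ * (starRingEnd ℂ) (g θ)) = fun θ => ∑' p : ℕ × ℕ, H p θ from
      funext hHsum]
    rw [← MeasureTheory.integral_tsum_of_summable_integral_norm hInt hSummable]
    rw [tsum_congr hval]
    have hdiag := Function.Injective.tsum_eq (g := fun n : ℕ => ((n, n) : ℕ × ℕ))
      (f := fun p : ℕ × ℕ => if p.1 = p.2 then ((2 * π : ℝ) : ℂ) *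
        (b p.1 * (starRingEnd ℂ) (b p.2)) else 0)
      (fun m n h => by simpa using congrArg Prod.fst h)
      (by
        intro p hp
        simp only [Function.mem_support, ne_eq] at hp
        by_contra hr
        apply hp
        rw [if_neg]
        intro h
        exact hr ⟨p.1, Prod.ext rfl h⟩)
    rw [← hdiag]
    have e2 : ∀ n : ℕ, (fun p : ℕ × ℕ => if p.1 = p.2 then ((2 * π : ℝ) : ℂ) *
        (b p.1 * (starRingEnd ℂ) (b p.2)) else 0) ((fun n : ℕ => ((n, n) : ℕ × ℕ)) n)
        = (((2 * π) * ‖b n‖ ^ 2 : ℝ) : ℂ) := by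
      intro n
      simp only [↓reduceIte]
      rw [Complex.mul_conj, Complex.normSq_eq_norm_sq]
      push_cast
      ring
    rw [tsum_congr e2, ← Complex.ofReal_tsum, tsum_mul_left]
  exact_mod_cast key

/-- for `λ ∈ [−1,1]` and `|u| < 1`,
`|(1/2π)∫₀^{2π}|1−e^{iθ}u|^{−2λ}dθ − 1 − λ²|u|²| ≤ |u|⁴/(1−|u|²)`. -/
theorem circle_moment_estimate_small_lambda (l : ℝ) (hl : |l| ≤ 1)
    (u : ℂ) (hu : ‖u‖ < 1) :
    |(1 / (2 * π)) * (∫ θ in (0:ℝ)..(2 * π),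
          ‖1 - Complex.exp (θ * Complex.I) * u‖ ^ (-(2 * l)))
        - 1 - l ^ 2 * ‖u‖ ^ 2|
      ≤ ‖u‖ ^ 4 / (1 - ‖u‖ ^ 2) := by
  have hr0 : (0:ℝ) ≤ ‖u‖ := norm_nonneg u
  have hr2 : ‖u‖ ^ 2 < 1 := by nlinarith
  have hr2' : (0:ℝ) ≤ ‖u‖ ^ 2 := by positivity
  set a : ℕ → ℝ := fun n => ‖bc l n * u ^ n‖ ^ 2 with hadef
  have hbound : ∀ n, a n ≤ (‖u‖ ^ 2) ^ n := by
    intro n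
    have h1 : ‖bc l n * u ^ n‖ ≤ ‖u‖ ^ n := by
      rw [norm_mul, norm_pow]
      calc ‖bc l n‖ * ‖u‖ ^ n ≤ 1 * ‖u‖ ^ n :=
            mul_le_mul_of_nonneg_right (bc_norm l hl n) (by positivity)
        _ = ‖u‖ ^ n := one_mul _
    calc a n = ‖bc l n * u ^ n‖ ^ 2 := rfl
      _ ≤ (‖u‖ ^ n) ^ 2 := by
          apply pow_le_pow_left₀ (norm_nonneg _) h1
      _ = (‖u‖ ^ 2) ^ n := by ring
  have hsuma : Summable a :=
    Summable.of_nonneg_of_le (fun n => by positivity) hbound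
      (summable_geometric_of_lt_one hr2' hr2)
  have hgeo : Summable (fun n : ℕ => (‖u‖ ^ 2) ^ n) := summable_geometric_of_lt_one hr2' hr2
  have hsplit := Summable.sum_add_tsum_nat_add 2 hsuma
  have ha0 : a 0 = 1 := by simp [hadef, bc_zero]
  have ha1 : a 1 = l ^ 2 * ‖u‖ ^ 2 := by
    simp only [hadef, bc_one, pow_one, norm_mul, Complex.norm_real]
    rw [mul_pow, Real.norm_eq_abs, sq_abs]
  have hrange : ∑ i ∈ Finset.range 2, a i = 1 + l ^ 2 * ‖u‖ ^ 2 := by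
    rw [Finset.sum_range_succ, Finset.sum_range_one, ha0, ha1]
  set T : ℝ := ∑' n : ℕ, a (n + 2) with hTdef
  have hTsum : (∑' n, a n) = 1 + l ^ 2 * ‖u‖ ^ 2 + T := by
    rw [← hsplit, hrange]
  have hT0 : 0 ≤ T := tsum_nonneg (fun n => by positivity)
  have hTle : T ≤ ‖u‖ ^ 4 / (1 - ‖u‖ ^ 2) := by
    have h1 : T ≤ ∑' n : ℕ, (‖u‖ ^ 2) ^ (n + 2) := by
      apply Summable.tsum_le_tsum (fun n => hbound (n + 2))
        ((summable_nat_add_iff 2).mpr hsuma) ((summable_nat_add_iff 2).mpr hgeo)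
    have h2 : (∑' n : ℕ, (‖u‖ ^ 2) ^ (n + 2)) = ‖u‖ ^ 4 / (1 - ‖u‖ ^ 2) := by
      have e : (fun n : ℕ => (‖u‖ ^ 2) ^ (n + 2)) = fun n : ℕ => (‖u‖ ^ 2) ^ n * ‖u‖ ^ 4 := by
        funext n; rw [pow_add]; ring
      rw [e, tsum_mul_right, tsum_geometric_of_lt_one hr2' hr2]
      rw [div_eq_mul_inv]; ring
    linarith
  rw [circle_integral_eq l hl u hu]
  have hπ : (2 : ℝ) * π ≠ 0 := by positivity
  rw [show (1 / (2 * π)) * (2 * π * ∑' n : ℕ, ‖bc l n * u ^ n‖ ^ 2)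
      = ∑' n, ‖bc l n * u ^ n‖ ^ 2 by field_simp]
  rw [hTsum]
  rw [show 1 + l ^ 2 * ‖u‖ ^ 2 + T - 1 - l ^ 2 * ‖u‖ ^ 2 = T by ring]
  rw [abs_of_nonneg hT0]
  exact hTle
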